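/- Let X be a chain and let α, β be orientation-preserving partial transformations of X. Then α and β are D-related in the monoid POP(X) (i.e. there exists γ ∈ POP(X) such that α R γ and γ L β, where α R γ means ∃ δ, ε ∈ POP(X) with α = γδ and γ = αε, and γ L β means ∃ δ, ε ∈ POP(X) with γ = δβ and β = εγ, composition written left-to-right with the left factor applied first) if and only if there exists a bijection θ : Im(α) → Im(β) which is orientation-preserving (as a partial transformation of X with domain Im(α)). -/

import Mathlib

variable {X : Type*}

/-- The partial transformation `f` is order-preserving on the subset `A` of its domain. -/
def IsOrdOn [LinearOrder X] (f : X →. X) (A : Set X) : Prop :=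
  ∀ ⦃x y u v : X⦄, x ∈ A → y ∈ A → x ≤ y → u ∈ f x → v ∈ f y → u ≤ v

/-- `Y` is an ideal of the partial transformation `f`: a nonempty subset of the domain such
that `f` is order-preserving on `Y` and on `Dom f \ Y`, and every element of `Y` is below every
element of `Dom f \ Y` while its image is above. -/
def IsIdeal [LinearOrder X] (f : X →. X) (Y : Set X) : Prop :=
  Y.Nonempty ∧ Y ⊆ f.Dom ∧ IsOrdOn f Y ∧ IsOrdOn f (f.Dom \ Y) ∧
    ∀ ⦃a b u v : X⦄, a ∈ Y → b ∈ f.Dom \ Y → u ∈ f a → v ∈ f b → a ≤ b ∧ v ≤ u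

/-- `f` is an orientation-preserving partial transformation: it is the empty transformation
or it admits an ideal. -/
def IsOP [LinearOrder X] (f : X →. X) : Prop :=
  f.Dom = ∅ ∨ ∃ Y : Set X, IsIdeal f Y

section Aux

variable [LinearOrder X]
set_option linter.unusedSectionVars false

lemma mem_pcomp {f g : X →. X} {x u : X} :
    u ∈ (g.comp f) x ↔ ∃ v, v ∈ f x ∧ u ∈ g v := by
  simp only [PFun.comp_apply, Part.mem_bind_iff, exists_prop]
  exact Part.mem_bind_iff

lemma isOP_of_ordOn {f : X →. X} (h : IsOrdOn f f.Dom) : IsOP f := by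
  rcases Set.eq_empty_or_nonempty f.Dom with he | hne
  · exact Or.inl he
  · refine Or.inr ⟨f.Dom, hne, subset_rfl, h, ?_, ?_⟩
    · intro x y u v hx _ _ _ _; exact absurd hx.1 hx.2
    · intro a b u v _ hb _ _; exact absurd hb.1 hb.2

/-- restriction of a partial map to a set -/
def restr (f : X →. X) (A : Set X) : X →. X :=
  fun x => ⟨x ∈ A ∧ (f x).Dom, fun h => (f x).get h.2⟩

lemma mem_restr {f : X →. X} {A : Set X} {x u : X} :
    u ∈ restr f A x ↔ x ∈ A ∧ u ∈ f x := by
  constructor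
  · rintro ⟨⟨hA, hd⟩, rfl⟩; exact ⟨hA, Part.get_mem hd⟩
  · rintro ⟨hA, hu⟩
    exact ⟨⟨hA, Part.dom_iff_mem.mpr ⟨u, hu⟩⟩, Part.get_eq_of_mem hu _⟩

lemma dom_restr {f : X →. X} {A : Set X} {x : X} :
    x ∈ (restr f A).Dom ↔ x ∈ A ∧ (f x).Dom := Iff.rfl

lemma isOP_restr {f : X →. X} (hf : IsOP f) (A : Set X) : IsOP (restr f A) := by
  rcases hf with h0 | ⟨Y, hYne, hYd, hfY, hfZ, hfP⟩
  · left
    ext x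
    simp only [Set.mem_empty_iff_false, iff_false]
    intro hx
    have : x ∈ f.Dom := (dom_restr.mp hx).2
    rw [h0] at this; exact this
  · have hsub : (restr f A).Dom ⊆ f.Dom := fun x hx => (dom_restr.mp hx).2
    by_cases hne : (Y ∩ (restr f A).Dom).Nonempty
    · refine Or.inr ⟨Y ∩ (restr f A).Dom, hne, fun x hx => hx.2, ?_, ?_, ?_⟩
      · intro x y u v hx hy hle hu hv
        exact hfY hx.1 hy.1 hle (mem_restr.mp hu).2 (mem_restr.mp hv).2
      · intro x y u v hx hy hle hu hv
        have hx' : x ∈ f.Dom \ Y := ⟨hsub hx.1, fun h => hx.2 ⟨h, hx.1⟩⟩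
        have hy' : y ∈ f.Dom \ Y := ⟨hsub hy.1, fun h => hy.2 ⟨h, hy.1⟩⟩
        exact hfZ hx' hy' hle (mem_restr.mp hu).2 (mem_restr.mp hv).2
      · intro a b u v ha hb hu hv
        have hb' : b ∈ f.Dom \ Y := ⟨hsub hb.1, fun h => hb.2 ⟨h, hb.1⟩⟩
        exact hfP ha.1 hb' (mem_restr.mp hu).2 (mem_restr.mp hv).2
    · apply isOP_of_ordOn
      intro x y u v hx hy hle hu hv
      have hx' : x ∈ f.Dom \ Y := ⟨hsub hx, fun h => hne ⟨x, h, hx⟩⟩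
      have hy' : y ∈ f.Dom \ Y := ⟨hsub hy, fun h => hne ⟨y, h, hy⟩⟩
      exact hfZ hx' hy' hle (mem_restr.mp hu).2 (mem_restr.mp hv).2

set_option linter.unusedSectionVars false

open Classical in
/-- a cross-section of `f`, preferring preimages in `Y` -/
noncomputable def sec (f : X →. X) (Y : Set X) : X →. X :=
  fun u => ⟨u ∈ f.ran, fun h =>
    if h' : ∃ x, x ∈ Y ∧ u ∈ f x then h'.choose else h.choose⟩

lemma dom_sec {f : X →. X} {Y : Set X} {u : X} :
    u ∈ (sec f Y).Dom ↔ u ∈ f.ran := Iff.rfl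

open Classical in
lemma mem_sec_iff {f : X →. X} {Y : Set X} {u v : X} :
    v ∈ sec f Y u ↔ ∃ h : u ∈ f.ran,
      (if h' : ∃ x, x ∈ Y ∧ u ∈ f x then h'.choose else h.choose) = v := by
  rw [sec]; exact Part.mem_mk_iff

lemma sec_spec {f : X →. X} {Y : Set X} {u v : X} (h : v ∈ sec f Y u) : u ∈ f v := by
  obtain ⟨hr, rfl⟩ := mem_sec_iff.mp h
  by_cases h' : ∃ x, x ∈ Y ∧ u ∈ f x
  · rw [dif_pos h']; exact h'.choose_spec.2
  · rw [dif_neg h']; exact hr.choose_spec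

lemma sec_mem_Y {f : X →. X} {Y : Set X} {u v : X} (h : v ∈ sec f Y u)
    (hx : ∃ x, x ∈ Y ∧ u ∈ f x) : v ∈ Y := by
  obtain ⟨hr, rfl⟩ := mem_sec_iff.mp h
  rw [dif_pos hx]; exact hx.choose_spec.1

lemma sec_mono_side {f : X →. X} {Y A : Set X} (hord : IsOrdOn f A)
    {u₁ u₂ v₁ v₂ : X} (h₁ : v₁ ∈ sec f Y u₁) (h₂ : v₂ ∈ sec f Y u₂)
    (hv₁ : v₁ ∈ A) (hv₂ : v₂ ∈ A) (hle : u₁ ≤ u₂) : v₁ ≤ v₂ := by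
  by_contra hlt
  push_neg at hlt
  have h21 : u₂ ≤ u₁ := hord hv₂ hv₁ hlt.le (sec_spec h₂) (sec_spec h₁)
  have heq : u₁ = u₂ := le_antisymm hle h21
  subst heq
  exact absurd (Part.mem_unique h₁ h₂) hlt.ne'

lemma sec_isOP {f : X →. X} {Y : Set X} (hI : IsIdeal f Y) : IsOP (sec f Y) := by
  obtain ⟨hYne, hYd, hfY, hfZ, hfP⟩ := hI
  have hside : ∀ {u v : X}, v ∈ sec f Y u →
      (¬∃ x, x ∈ Y ∧ u ∈ f x) → v ∈ f.Dom \ Y := by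
    intro u v hv hP
    refine ⟨?_, fun hvY => hP ⟨v, hvY, sec_spec hv⟩⟩
    exact (PFun.mem_dom f v).mpr ⟨u, sec_spec hv⟩
  by_cases hne : ({u | u ∈ f.ran ∧ ¬∃ x, x ∈ Y ∧ u ∈ f x} : Set X).Nonempty
  · refine Or.inr ⟨{u | u ∈ f.ran ∧ ¬∃ x, x ∈ Y ∧ u ∈ f x}, hne,
      fun u hu => dom_sec.mpr hu.1, ?_, ?_, ?_⟩
    · intro x y u v hx hy hle hu hv
      exact sec_mono_side hfZ hu hv (hside hu hx.2) (hside hv hy.2) hle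
    · intro x y u v hx hy hle hu hv
      have hPx : ∃ a, a ∈ Y ∧ x ∈ f a :=
        not_not.mp fun h => hx.2 ⟨dom_sec.mp hx.1, h⟩
      have hPy : ∃ a, a ∈ Y ∧ y ∈ f a :=
        not_not.mp fun h => hy.2 ⟨dom_sec.mp hy.1, h⟩
      exact sec_mono_side hfY hu hv (sec_mem_Y hu hPx) (sec_mem_Y hv hPy) hle
    · intro a b u v ha hb hu hv
      have hPb : ∃ x, x ∈ Y ∧ b ∈ f x :=
        not_not.mp fun h => hb.2 ⟨dom_sec.mp hb.1, h⟩
      have h1 := hfP (sec_mem_Y hv hPb) (hside hu ha.2) (sec_spec hv) (sec_spec hu)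
      exact ⟨h1.2, h1.1⟩
  · apply isOP_of_ordOn
    intro x y u v hx hy hle hu hv
    have hPx : ∃ a, a ∈ Y ∧ x ∈ f a :=
      not_not.mp fun h => hne ⟨x, dom_sec.mp hx, h⟩
    have hPy : ∃ a, a ∈ Y ∧ y ∈ f a :=
      not_not.mp fun h => hne ⟨y, dom_sec.mp hy, h⟩
    exact sec_mono_side hfY hu hv (sec_mem_Y hu hPx) (sec_mem_Y hv hPy) hle

lemma isOP_comp {f g : X →. X} (hf : IsOP f) (hg : IsOP g) : IsOP (g.comp f) := by
  rcases hf with hf0 | ⟨Y, hYne, hYd, hfY, hfZ, hfP⟩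
  · left
    ext x
    simp only [Set.mem_empty_iff_false, iff_false]
    intro hx
    obtain ⟨u, hu⟩ := (PFun.mem_dom _ x).mp hx
    obtain ⟨v, hv, _⟩ := mem_pcomp.mp hu
    have hxd : x ∈ f.Dom := (PFun.mem_dom f x).mpr ⟨v, hv⟩
    rw [hf0] at hxd; exact hxd
  rcases hg with hg0 | ⟨W, hWne, hWd, hgY, hgZ, hgP⟩
  · left
    ext x
    simp only [Set.mem_empty_iff_false, iff_false]
    intro hx
    obtain ⟨u, hu⟩ := (PFun.mem_dom _ x).mp hx
    obtain ⟨v, hv, huv⟩ := mem_pcomp.mp hu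
    have hvd : v ∈ g.Dom := (PFun.mem_dom g v).mpr ⟨u, huv⟩
    rw [hg0] at hvd; exact hvd
  have hWV : ∀ {p q : X}, p ∈ W → q ∈ g.Dom \ W → p < q := by
    intro p q hp hq
    obtain ⟨u, hu⟩ := (PFun.mem_dom g p).mp (hWd hp)
    obtain ⟨v, hv⟩ := (PFun.mem_dom g q).mp hq.1
    exact lt_of_le_of_ne (hgP hp hq hu hv).1 (fun h => hq.2 (h ▸ hp))
  have hYZ : ∀ {a b : X}, a ∈ Y → b ∈ f.Dom \ Y → a < b := by
    intro a b ha hb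
    obtain ⟨u, hu⟩ := (PFun.mem_dom f a).mp (hYd ha)
    obtain ⟨v, hv⟩ := (PFun.mem_dom f b).mp hb.1
    exact lt_of_le_of_ne (hfP ha hb hu hv).1 (fun h => hb.2 (h ▸ ha))
  have memZ : ∀ {x p : X}, p ∈ f x → x ∉ Y → x ∈ f.Dom \ Y :=
    fun {x p} hp hx => ⟨(PFun.mem_dom f x).mpr ⟨p, hp⟩, hx⟩
  have memV : ∀ {p u : X}, u ∈ g p → p ∉ W → p ∈ g.Dom \ W :=
    fun {p u} hu hp => ⟨(PFun.mem_dom g p).mpr ⟨u, hu⟩, hp⟩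
  by_cases hA1 : ∃ a, a ∈ Y ∧ ∃ m, m ∈ f a ∧ m ∈ W
  · -- the set A1 of points of Y whose value lies in W is nonempty
    obtain ⟨a1, ha1Y, m, hm, hmW⟩ := hA1
    have noB2 : ∀ {b q : X}, b ∈ f.Dom \ Y → q ∈ f b → q ∈ g.Dom → q ∈ W := by
      intro b q hb hq hqd
      by_contra hqW
      exact absurd (hfP ha1Y hb hm hq).2 (not_le.mpr (hWV hmW ⟨hqd, hqW⟩))
    have classify : ∀ {x p u : X}, p ∈ f x → u ∈ g p →
        x ∉ {x | x ∈ Y ∧ ∃ m, m ∈ f x ∧ m ∈ W} →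
        (x ∈ Y ∧ p ∈ g.Dom \ W) ∨ (x ∈ f.Dom \ Y ∧ p ∈ W) := by
      intro x p u hp hu hx
      by_cases hxY : x ∈ Y
      · exact Or.inl ⟨hxY, memV hu (fun hpW => hx ⟨hxY, p, hp, hpW⟩)⟩
      · exact Or.inr ⟨memZ hp hxY,
          noB2 (memZ hp hxY) hp ((PFun.mem_dom g p).mpr ⟨u, hu⟩)⟩
    refine Or.inr ⟨{x | x ∈ Y ∧ ∃ m, m ∈ f x ∧ m ∈ W}, ⟨a1, ha1Y, m, hm, hmW⟩,
      ?_, ?_, ?_, ?_⟩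
    · rintro x ⟨hxY, p, hp, hpW⟩
      obtain ⟨u, hu⟩ := (PFun.mem_dom g p).mp (hWd hpW)
      exact (PFun.mem_dom _ x).mpr ⟨u, mem_pcomp.mpr ⟨p, hp, hu⟩⟩
    · rintro x y u v ⟨hxY, mx, hmx, hmxW⟩ ⟨hyY, my, hmy, hmyW⟩ hle hu hv
      obtain ⟨p, hp, hup⟩ := mem_pcomp.mp hu
      obtain ⟨q, hq, hvq⟩ := mem_pcomp.mp hv
      have hpW : p ∈ W := Part.mem_unique hmx hp ▸ hmxW
      have hqW : q ∈ W := Part.mem_unique hmy hq ▸ hmyW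
      exact hgY hpW hqW (hfY hxY hyY hle hp hq) hup hvq
    · rintro x y u v hx hy hle hu hv
      obtain ⟨p, hp, hup⟩ := mem_pcomp.mp hu
      obtain ⟨q, hq, hvq⟩ := mem_pcomp.mp hv
      rcases classify hp hup hx.2 with ⟨hxY, hpV⟩ | ⟨hxZ, hpW⟩ <;>
        rcases classify hq hvq hy.2 with ⟨hyY, hqV⟩ | ⟨hyZ, hqW⟩
      · exact hgZ hpV hqV (hfY hxY hyY hle hp hq) hup hvq
      · exact (hgP hqW hpV hvq hup).2
      · exact absurd hle (not_le.mpr (hYZ hyY hxZ))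
      · exact hgY hpW hqW (hfZ hxZ hyZ hle hp hq) hup hvq
    · rintro a b u v ⟨haY, ma, hma, hmaW⟩ hb hu hv
      obtain ⟨p, hp, hup⟩ := mem_pcomp.mp hu
      obtain ⟨q, hq, hvq⟩ := mem_pcomp.mp hv
      have hpW : p ∈ W := Part.mem_unique hma hp ▸ hmaW
      rcases classify hq hvq hb.2 with ⟨hbY, hqV⟩ | ⟨hbZ, hqW⟩
      · constructor
        · by_contra hab
          push_neg at hab
          exact absurd (hfY hbY haY hab.le hq hp) (not_le.mpr (hWV hpW hqV))
        · exact (hgP hpW hqV hup hvq).2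
      · obtain ⟨h1, h2⟩ := hfP haY hbZ hp hq
        exact ⟨h1, hgY hqW hpW h2 hvq hup⟩
  · -- A1 is empty
    have noA1 : ∀ {x p : X}, x ∈ Y → p ∈ f x → p ∉ W :=
      fun {x p} hx hp hpW => hA1 ⟨x, hx, p, hp, hpW⟩
    have classifyC : ∀ {x p u : X}, p ∈ f x → u ∈ g p →
        x ∈ {x | (x ∈ Y ∧ ∃ p, p ∈ f x ∧ p ∈ g.Dom) ∨
              ((x ∈ f.Dom \ Y) ∧ ∃ p, p ∈ f x ∧ p ∈ W)} →
        (x ∈ Y ∧ p ∈ g.Dom \ W) ∨ (x ∈ f.Dom \ Y ∧ p ∈ W) := by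
      rintro x p u hp hu (⟨hxY, _⟩ | ⟨hxZ, p', hp', hp'W⟩)
      · exact Or.inl ⟨hxY, memV hu (noA1 hxY hp)⟩
      · exact Or.inr ⟨hxZ, Part.mem_unique hp' hp ▸ hp'W⟩
    have classify2 : ∀ {x p u : X}, p ∈ f x → u ∈ g p →
        x ∉ {x | (x ∈ Y ∧ ∃ p, p ∈ f x ∧ p ∈ g.Dom) ∨
              ((x ∈ f.Dom \ Y) ∧ ∃ p, p ∈ f x ∧ p ∈ W)} →
        (x ∈ f.Dom \ Y) ∧ p ∈ g.Dom \ W := by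
      intro x p u hp hu hx
      have hpd : p ∈ g.Dom := (PFun.mem_dom g p).mpr ⟨u, hu⟩
      by_cases hxY : x ∈ Y
      · exact absurd (Or.inl ⟨hxY, p, hp, hpd⟩) hx
      · by_cases hpW : p ∈ W
        · exact absurd (Or.inr ⟨memZ hp hxY, p, hp, hpW⟩) hx
        · exact ⟨memZ hp hxY, ⟨hpd, hpW⟩⟩
    by_cases hC : ({x | (x ∈ Y ∧ ∃ p, p ∈ f x ∧ p ∈ g.Dom) ∨
        ((x ∈ f.Dom \ Y) ∧ ∃ p, p ∈ f x ∧ p ∈ W)} : Set X).Nonempty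
    · refine Or.inr ⟨_, hC, ?_, ?_, ?_, ?_⟩
      · rintro x (⟨hxY, p, hp, hpd⟩ | ⟨hxZ, p, hp, hpW⟩)
        · obtain ⟨u, hu⟩ := (PFun.mem_dom g p).mp hpd
          exact (PFun.mem_dom _ x).mpr ⟨u, mem_pcomp.mpr ⟨p, hp, hu⟩⟩
        · obtain ⟨u, hu⟩ := (PFun.mem_dom g p).mp (hWd hpW)
          exact (PFun.mem_dom _ x).mpr ⟨u, mem_pcomp.mpr ⟨p, hp, hu⟩⟩
      · rintro x y u v hx hy hle hu hv
        obtain ⟨p, hp, hup⟩ := mem_pcomp.mp hu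
        obtain ⟨q, hq, hvq⟩ := mem_pcomp.mp hv
        rcases classifyC hp hup hx with ⟨hxY, hpV⟩ | ⟨hxZ, hpW⟩ <;>
          rcases classifyC hq hvq hy with ⟨hyY, hqV⟩ | ⟨hyZ, hqW⟩
        · exact hgZ hpV hqV (hfY hxY hyY hle hp hq) hup hvq
        · exact (hgP hqW hpV hvq hup).2
        · exact absurd hle (not_le.mpr (hYZ hyY hxZ))
        · exact hgY hpW hqW (hfZ hxZ hyZ hle hp hq) hup hvq
      · rintro x y u v hx hy hle hu hv
        obtain ⟨p, hp, hup⟩ := mem_pcomp.mp hu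
        obtain ⟨q, hq, hvq⟩ := mem_pcomp.mp hv
        obtain ⟨hxZ, hpV⟩ := classify2 hp hup hx.2
        obtain ⟨hyZ, hqV⟩ := classify2 hq hvq hy.2
        exact hgZ hpV hqV (hfZ hxZ hyZ hle hp hq) hup hvq
      · rintro a b u v ha hb hu hv
        obtain ⟨p, hp, hup⟩ := mem_pcomp.mp hu
        obtain ⟨q, hq, hvq⟩ := mem_pcomp.mp hv
        obtain ⟨hbZ, hqV⟩ := classify2 hq hvq hb.2
        rcases classifyC hp hup ha with ⟨haY, hpV⟩ | ⟨haZ, hpW⟩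
        · obtain ⟨h1, h2⟩ := hfP haY hbZ hp hq
          exact ⟨h1, hgZ hqV hpV h2 hvq hup⟩
        · constructor
          · by_contra hab
            push_neg at hab
            exact absurd (hfZ hbZ haZ hab.le hq hp) (not_le.mpr (hWV hpW hqV))
          · exact (hgP hpW hqV hup hvq).2
    · apply isOP_of_ordOn
      intro x y u v hx hy hle hu hv
      obtain ⟨p, hp, hup⟩ := mem_pcomp.mp hu
      obtain ⟨q, hq, hvq⟩ := mem_pcomp.mp hv
      obtain ⟨hxZ, hpV⟩ := classify2 hp hup (fun h => hC ⟨x, h⟩)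
      obtain ⟨hyZ, hqV⟩ := classify2 hq hvq (fun h => hC ⟨y, h⟩)
      exact hgZ hpV hqV (hfZ hxZ hyZ hle hp hq) hup hvq

lemma pfun_eq_of_dom_empty {f g : X →. X} (hf : f.Dom = ∅) (hg : g.Dom = ∅) :
    f = g := by
  apply PFun.ext
  intro a b
  constructor <;> intro h
  · have ha : a ∈ f.Dom := (PFun.mem_dom f a).mpr ⟨b, h⟩
    rw [hf] at ha; exact ha.elim
  · have ha : a ∈ g.Dom := (PFun.mem_dom g a).mpr ⟨b, h⟩
    rw [hg] at ha; exact ha.elim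

lemma dom_empty_comp {f g : X →. X} (hf : f.Dom = ∅) : (g.comp f).Dom = ∅ := by
  ext x
  simp only [Set.mem_empty_iff_false, iff_false]
  intro hx
  obtain ⟨u, hu⟩ := (PFun.mem_dom _ x).mp hx
  obtain ⟨v, hv, _⟩ := mem_pcomp.mp hu
  have hxd : x ∈ f.Dom := (PFun.mem_dom f x).mpr ⟨v, hv⟩
  rw [hf] at hxd; exact hxd

end Aux

/-- Green's relation `D` in `POP(X)`: `α D β` iff there is an orientation-preserving
bijection `θ` from `Im α` onto `Im β`. -/
theorem stmt17 (X : Type*) [LinearOrder X] (α β : X →. X)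
    (hα : IsOP α) (hβ : IsOP β) :
    (∃ γ : X →. X, IsOP γ ∧
      (∃ δ ε : X →. X, IsOP δ ∧ IsOP ε ∧ α = δ.comp γ ∧ γ = ε.comp α) ∧
      (∃ δ ε : X →. X, IsOP δ ∧ IsOP ε ∧ γ = β.comp δ ∧ β = γ.comp ε)) ↔
    (∃ θ : X →. X, IsOP θ ∧ θ.Dom = α.ran ∧
      (∀ ⦃x y u : X⦄, u ∈ θ x → u ∈ θ y → x = y) ∧ θ.ran = β.ran) := by
  constructor
  · rintro ⟨γ, hγ, ⟨δR, εR, hδR, hεR, hαc, hγc⟩, ⟨δL, εL, hδL, hεL, hγc2, hβc⟩⟩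
    have hγmem : ∀ {a w : X}, w ∈ γ a ↔ ∃ u, u ∈ α a ∧ w ∈ εR u := by
      intro a w; rw [hγc]; exact mem_pcomp
    have hαmem : ∀ {a w : X}, w ∈ α a ↔ ∃ c, c ∈ γ a ∧ w ∈ δR c := by
      intro a w; conv_lhs => rw [hαc]
      exact mem_pcomp
    have key : ∀ {u : X}, u ∈ α.ran → (εR u).Dom := by
      intro u hu
      obtain ⟨a, ha⟩ := hu
      obtain ⟨c, hc, _⟩ := hαmem.mp ha
      obtain ⟨u', hu', hw⟩ := hγmem.mp hc
      have huu : u' = u := Part.mem_unique hu' ha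
      exact Part.dom_iff_mem.mpr ⟨c, huu ▸ hw⟩
    refine ⟨restr εR α.ran, isOP_restr hεR _, ?_, ?_, ?_⟩
    · ext u
      rw [dom_restr]
      exact ⟨fun h => h.1, fun h => ⟨h, key h⟩⟩
    · intro x y u hux huy
      obtain ⟨hxr, hx⟩ := mem_restr.mp hux
      obtain ⟨hyr, hy⟩ := mem_restr.mp huy
      obtain ⟨a, ha⟩ := hxr
      obtain ⟨b, hb⟩ := hyr
      have hua : u ∈ γ a := hγmem.mpr ⟨x, ha, hx⟩
      have hub : u ∈ γ b := hγmem.mpr ⟨y, hb, hy⟩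
      obtain ⟨c, hc, hxd⟩ := hαmem.mp ha
      obtain ⟨c', hc', hyd⟩ := hαmem.mp hb
      have hcu : c = u := Part.mem_unique hc hua
      have hcu' : c' = u := Part.mem_unique hc' hub
      exact Part.mem_unique (hcu ▸ hxd) (hcu' ▸ hyd)
    · ext w
      constructor
      · rintro ⟨u, hu⟩
        obtain ⟨hur, hw⟩ := mem_restr.mp hu
        obtain ⟨a, ha⟩ := hur
        have hwγ : w ∈ γ a := hγmem.mpr ⟨u, ha, hw⟩
        rw [hγc2] at hwγ
        obtain ⟨c, _, hwc⟩ := mem_pcomp.mp hwγ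
        exact ⟨c, hwc⟩
      · rintro ⟨b, hb⟩
        rw [hβc] at hb
        obtain ⟨c, _, hwc⟩ := mem_pcomp.mp hb
        obtain ⟨u, hu, hw⟩ := hγmem.mp hwc
        exact ⟨u, mem_restr.mpr ⟨⟨c, hu⟩, hw⟩⟩
  · rintro ⟨θ, hθ, hθdom, hθinj, hθran⟩
    by_cases hαe : α.Dom = ∅
    · have hrane : α.ran = ∅ := by
        ext u
        simp only [Set.mem_empty_iff_false, iff_false]
        rintro ⟨a, ha⟩
        have had : a ∈ α.Dom := (PFun.mem_dom α a).mpr ⟨u, ha⟩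
        rw [hαe] at had; exact had
      have hθde : θ.Dom = ∅ := by rw [hθdom, hrane]
      have hθre : θ.ran = ∅ := by
        ext u
        simp only [Set.mem_empty_iff_false, iff_false]
        rintro ⟨a, ha⟩
        have had : a ∈ θ.Dom := (PFun.mem_dom θ a).mpr ⟨u, ha⟩
        rw [hθde] at had; exact had
      have hβre : β.ran = ∅ := by rw [← hθran, hθre]
      have hβe : β.Dom = ∅ := by
        ext x
        simp only [Set.mem_empty_iff_false, iff_false]
        intro hx
        obtain ⟨u, hu⟩ := (PFun.mem_dom β x).mp hx
        have hur : u ∈ β.ran := ⟨x, hu⟩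
        rw [hβre] at hur; exact hur
      refine ⟨α, hα, ⟨α, α, hα, hα, ?_, ?_⟩, ⟨α, α, hα, hα, ?_, ?_⟩⟩
      · exact pfun_eq_of_dom_empty hαe (dom_empty_comp hαe)
      · exact pfun_eq_of_dom_empty hαe (dom_empty_comp hαe)
      · exact pfun_eq_of_dom_empty hαe (dom_empty_comp hαe)
      · exact pfun_eq_of_dom_empty hβe (dom_empty_comp hαe)
    · -- nondegenerate case
      obtain ⟨x0, hx0⟩ := Set.nonempty_iff_ne_empty.mpr hαe
      obtain ⟨u0, hu0⟩ := (PFun.mem_dom α x0).mp hx0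
      have hu0r : u0 ∈ α.ran := ⟨x0, hu0⟩
      have hu0θ : u0 ∈ θ.Dom := by rw [hθdom]; exact hu0r
      obtain ⟨w0, hw0⟩ := (PFun.mem_dom θ u0).mp hu0θ
      have hw0r : w0 ∈ β.ran := by rw [← hθran]; exact ⟨u0, hw0⟩
      obtain ⟨b0, hb0⟩ := hw0r
      rcases hα with hαE | ⟨Yα, hYα⟩
      · exact absurd hαE hαe
      rcases hθ with hθE | ⟨Yθ, hYθ⟩
      · rw [hθE] at hu0θ; exact hu0θ.elim
      rcases hβ with hβE | ⟨Yβ, hYβ⟩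
      · have hb0d : b0 ∈ β.Dom := (PFun.mem_dom β b0).mpr ⟨w0, hb0⟩
        rw [hβE] at hb0d; exact hb0d.elim
      have hαOP : IsOP α := Or.inr ⟨Yα, hYα⟩
      have hθOP : IsOP θ := Or.inr ⟨Yθ, hYθ⟩
      have hβOP : IsOP β := Or.inr ⟨Yβ, hYβ⟩
      refine ⟨θ.comp α, isOP_comp hαOP hθOP,
        ⟨sec θ Yθ, θ, sec_isOP hYθ, hθOP, ?_, rfl⟩,
        ⟨(sec β Yβ).comp (θ.comp α), (sec α Yα).comp ((sec θ Yθ).comp β),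
          isOP_comp (isOP_comp hαOP hθOP) (sec_isOP hYβ),
          isOP_comp (isOP_comp hβOP (sec_isOP hYθ)) (sec_isOP hYα), ?_, ?_⟩⟩
      · -- α = (sec θ Yθ).comp (θ.comp α)
        apply PFun.ext
        intro a w
        constructor
        · intro hw
          obtain ⟨t, ht⟩ := (PFun.mem_dom θ w).mp
            (by rw [hθdom]; exact ⟨a, hw⟩)
          have htr : t ∈ θ.ran := ⟨w, ht⟩
          have hd : (sec θ Yθ t).Dom := htr
          have hv := Part.get_mem hd
          have hg : (sec θ Yθ t).get hd = w := hθinj (sec_spec hv) ht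
          exact mem_pcomp.mpr ⟨t, mem_pcomp.mpr ⟨w, hw, ht⟩, hg ▸ hv⟩
        · intro hw
          obtain ⟨t, ht, hwt⟩ := mem_pcomp.mp hw
          obtain ⟨c, hc, htc⟩ := mem_pcomp.mp ht
          have hwc : w = c := hθinj (sec_spec hwt) htc
          rw [hwc]; exact hc
      · -- θ.comp α = β.comp ((sec β Yβ).comp (θ.comp α))
        apply PFun.ext
        intro a w
        constructor
        · intro hw
          have hwr : w ∈ β.ran := by
            rw [← hθran]
            obtain ⟨c, _, hwc⟩ := mem_pcomp.mp hw
            exact ⟨c, hwc⟩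
          have hd : (sec β Yβ w).Dom := hwr
          have ht := Part.get_mem hd
          exact mem_pcomp.mpr ⟨_, mem_pcomp.mpr ⟨w, hw, ht⟩, sec_spec ht⟩
        · intro hw
          obtain ⟨t, ht, hwt⟩ := mem_pcomp.mp hw
          obtain ⟨c, hc, htc⟩ := mem_pcomp.mp ht
          have hcb : c ∈ β t := sec_spec htc
          have hwceq : w = c := Part.mem_unique hwt hcb
          rw [hwceq]; exact hc
      · -- β = (θ.comp α).comp ((sec α Yα).comp ((sec θ Yθ).comp β))
        apply PFun.ext
        intro x w
        constructor
        · intro hw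
          have hwr : w ∈ θ.ran := by rw [hθran]; exact ⟨x, hw⟩
          have hd1 : (sec θ Yθ w).Dom := hwr
          have hr := Part.get_mem hd1
          have hwθ : w ∈ θ ((sec θ Yθ w).get hd1) := sec_spec hr
          have hrd : (sec θ Yθ w).get hd1 ∈ α.ran := by
            rw [← hθdom]
            exact (PFun.mem_dom θ _).mpr ⟨w, hwθ⟩
          have hd2 : (sec α Yα ((sec θ Yθ w).get hd1)).Dom := hrd
          have ht := Part.get_mem hd2
          have hrα := sec_spec ht
          exact mem_pcomp.mpr ⟨_, mem_pcomp.mpr ⟨_, mem_pcomp.mpr ⟨w, hw, hr⟩, ht⟩,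
            mem_pcomp.mpr ⟨_, hrα, hwθ⟩⟩
        · intro hw
          obtain ⟨t, ht, hwt⟩ := mem_pcomp.mp hw
          obtain ⟨r, hr, htr⟩ := mem_pcomp.mp ht
          obtain ⟨b, hb, hrb⟩ := mem_pcomp.mp hr
          obtain ⟨c, hc, hwc⟩ := mem_pcomp.mp hwt
          have h1 : b ∈ θ r := sec_spec hrb
          have h2 : r ∈ α t := sec_spec htr
          have h3 : c = r := Part.mem_unique hc h2
          rw [h3] at hwc
          have h4 : w = b := Part.mem_unique hwc h1
          rw [h4]; exact hb
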